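/- A nonempty diagram satisfying the boundary conditions admits exactly one strongly extremal column: if its height r is odd this is the leftmost column of height r, and if r is even it is the rightmost column of height r. Moreover, a single block may be added to the top of a column C of maximal height r so that the resulting diagram still satisfies the boundary conditions if and only if C is the strongly extremal column. -/

import Mathlib

/-- Column `i` is left extremal: nonempty and no column to its left has height `≥ ht i`. -/
def LeftExtremal {n : ℕ} (ht : Fin n → ℕ) (i : Fin n) : Prop :=
  0 < ht i ∧ ∀ j : Fin n, j < i → ht j < ht i

/-- Column `i` is right extremal: nonempty and no column to its right has height `≥ ht i`. -/
def RightExtremal {n : ℕ} (ht : Fin n → ℕ) (i : Fin n) : Prop :=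
  0 < ht i ∧ ∀ j : Fin n, i < j → ht j < ht i

/-- The maximal column height of the diagram. -/
def maxHt {n : ℕ} (ht : Fin n → ℕ) : ℕ := Finset.univ.sup ht

/-- The boundary conditions: every left extremal column has even or maximal height,
every right extremal column has odd or maximal height. -/
def Boundary {n : ℕ} (ht : Fin n → ℕ) : Prop :=
  (∀ i, LeftExtremal ht i → Even (ht i) ∨ ht i = maxHt ht) ∧
  (∀ i, RightExtremal ht i → Odd (ht i) ∨ ht i = maxHt ht)

/-- A left even domino can be adjoined to column `i`: `ht i` is even and the column of
height `ht i + 2` obtained would have a right neighbour of height `≥ ht i + 2` at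
levels `ht i + 1, ht i + 2`. -/
def CanAddLeftEven {n : ℕ} (ht : Fin n → ℕ) (i : Fin n) : Prop :=
  Even (ht i) ∧ ∃ j : Fin n, i < j ∧ ht i + 2 ≤ ht j ∧ ∀ k : Fin n, i < k → k < j → ht k ≤ ht i

/-- Dually, a right odd domino can be adjoined to column `i`. -/
def CanAddRightOdd {n : ℕ} (ht : Fin n → ℕ) (i : Fin n) : Prop :=
  Odd (ht i) ∧ ∃ j : Fin n, j < i ∧ ht i + 2 ≤ ht j ∧ ∀ k : Fin n, j < k → k < i → ht k ≤ ht i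

/-- A diagram is complete if no left even or right odd domino can be adjoined. -/
def Complete {n : ℕ} (ht : Fin n → ℕ) : Prop :=
  ∀ i, ¬ CanAddLeftEven ht i ∧ ¬ CanAddRightOdd ht i

/-- Column `i` is strongly extremal: it has the maximal height `r` and is the
leftmost column of height `r` when `r` is odd, the rightmost when `r` is even. -/
def StronglyExtremal {n : ℕ} (ht : Fin n → ℕ) (i : Fin n) : Prop :=
  ht i = maxHt ht ∧
    (Odd (maxHt ht) → ∀ j : Fin n, j < i → ht j < maxHt ht) ∧
    (Even (maxHt ht) → ∀ j : Fin n, i < j → ht j < maxHt ht)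

/-- a nonempty diagram satisfying the boundary conditions has exactly one
strongly extremal column; moreover a single block may be added on top of a column `i`
of maximal height with the boundary conditions preserved iff `i` is strongly extremal. -/
theorem stmt_6 (t : ℕ) (ht : Fin (t+1) → ℕ) (hb : Boundary ht) (hne : ∃ i, 0 < ht i) :
    (∃! i : Fin (t+1), StronglyExtremal ht i) ∧
    ∀ i : Fin (t+1), ht i = maxHt ht →
      (Boundary (Function.update ht i (ht i + 1)) ↔ StronglyExtremal ht i) := by
  have hle : ∀ j, ht j ≤ maxHt ht := fun j => Finset.le_sup (Finset.mem_univ j)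
  have hrpos : 0 < maxHt ht := by
    obtain ⟨i, hi⟩ := hne
    exact lt_of_lt_of_le hi (hle i)
  have hSne : (Finset.univ.filter (fun j => ht j = maxHt ht)).Nonempty := by
    obtain ⟨b, _, hb'⟩ := Finset.exists_mem_eq_sup Finset.univ Finset.univ_nonempty ht
    exact ⟨b, Finset.mem_filter.2 ⟨Finset.mem_univ b, hb'.symm⟩⟩
  have hmemS : ∀ j, ht j = maxHt ht →
      j ∈ Finset.univ.filter (fun j => ht j = maxHt ht) :=
    fun j hj => Finset.mem_filter.2 ⟨Finset.mem_univ j, hj⟩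
  -- existence
  have hex : ∃ i, StronglyExtremal ht i := by
    rcases Nat.even_or_odd (maxHt ht) with he | ho
    · set i0 := (Finset.univ.filter (fun j => ht j = maxHt ht)).max' hSne with hi0
      have hmem := (Finset.univ.filter (fun j => ht j = maxHt ht)).max'_mem hSne
      have hi0r : ht i0 = maxHt ht := (Finset.mem_filter.1 hmem).2
      refine ⟨i0, hi0r, fun hodd => absurd hodd (Nat.not_odd_iff_even.2 he), fun _ j hj => ?_⟩
      rcases lt_or_eq_of_le (hle j) with h | h
      · exact h
      · exact absurd (Finset.le_max' _ j (hmemS j h)) (not_le.2 hj)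
    · set i0 := (Finset.univ.filter (fun j => ht j = maxHt ht)).min' hSne with hi0
      have hmem := (Finset.univ.filter (fun j => ht j = maxHt ht)).min'_mem hSne
      have hi0r : ht i0 = maxHt ht := (Finset.mem_filter.1 hmem).2
      refine ⟨i0, hi0r, fun _ j hj => ?_, fun heven => absurd ho (Nat.not_odd_iff_even.2 heven)⟩
      rcases lt_or_eq_of_le (hle j) with h | h
      · exact h
      · exact absurd (Finset.min'_le _ j (hmemS j h)) (not_le.2 hj)
  have huniq : ∀ i i' : Fin (t+1), StronglyExtremal ht i → StronglyExtremal ht i' → i = i' := by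
    intro i i' hi hi'
    by_contra hne'
    rcases lt_or_gt_of_ne hne' with h | h
    · rcases Nat.even_or_odd (maxHt ht) with he | ho
      · exact (hi.2.2 he i' h).ne hi'.1
      · exact (hi'.2.1 ho i h).ne hi.1
    · rcases Nat.even_or_odd (maxHt ht) with he | ho
      · exact (hi'.2.2 he i h).ne hi.1
      · exact (hi.2.1 ho i' h).ne hi'.1
  refine ⟨⟨hex.choose, hex.choose_spec, fun y hy => huniq y hex.choose hy hex.choose_spec⟩, ?_⟩
  intro i hir
  set f := Function.update ht i (ht i + 1) with hf
  have hfi : f i = maxHt ht + 1 := by rw [hf, Function.update_self, hir]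
  have hfj : ∀ j : Fin (t+1), j ≠ i → f j = ht j := fun j hj => Function.update_of_ne hj _ _
  have hfle : ∀ j, f j ≤ maxHt ht + 1 := by
    intro j
    by_cases hj : j = i
    · rw [hj, hfi]
    · rw [hfj j hj]; exact le_trans (hle j) (Nat.le_succ _)
  have hmaxf : maxHt f = maxHt ht + 1 := by
    refine le_antisymm (Finset.sup_le fun j _ => hfle j) ?_
    exact hfi ▸ Finset.le_sup (Finset.mem_univ i)
  constructor
  · -- Boundary f → StronglyExtremal
    intro hbf
    refine ⟨hir, ?_, ?_⟩
    · intro hodd j hj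
      by_contra hc
      have hjr : ht j = maxHt ht := le_antisymm (hle j) (not_lt.1 hc)
      set j0 := (Finset.univ.filter (fun j => ht j = maxHt ht)).min' hSne with hj0
      have hmem := (Finset.univ.filter (fun j => ht j = maxHt ht)).min'_mem hSne
      have hj0r : ht j0 = maxHt ht := (Finset.mem_filter.1 hmem).2
      have hj0i : j0 < i := lt_of_le_of_lt (Finset.min'_le _ j (hmemS j hjr)) hj
      have hLE : LeftExtremal f j0 := by
        constructor
        · rw [hfj j0 hj0i.ne, hj0r]; exact hrpos
        · intro k hk
          rw [hfj k (hk.trans hj0i).ne, hfj j0 hj0i.ne, hj0r]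
          rcases lt_or_eq_of_le (hle k) with h | h
          · exact h
          · exact absurd (Finset.min'_le _ k (hmemS k h)) (not_le.2 hk)
      rcases hbf.1 j0 hLE with heven | hmax
      · rw [hfj j0 hj0i.ne, hj0r] at heven
        exact (Nat.not_odd_iff_even.2 heven) hodd
      · rw [hfj j0 hj0i.ne, hj0r, hmaxf] at hmax
        omega
    · intro heven j hj
      by_contra hc
      have hjr : ht j = maxHt ht := le_antisymm (hle j) (not_lt.1 hc)
      set j0 := (Finset.univ.filter (fun j => ht j = maxHt ht)).max' hSne with hj0
      have hmem := (Finset.univ.filter (fun j => ht j = maxHt ht)).max'_mem hSne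
      have hj0r : ht j0 = maxHt ht := (Finset.mem_filter.1 hmem).2
      have hj0i : i < j0 := lt_of_lt_of_le hj (Finset.le_max' _ j (hmemS j hjr))
      have hRE : RightExtremal f j0 := by
        constructor
        · rw [hfj j0 hj0i.ne', hj0r]; exact hrpos
        · intro k hk
          rw [hfj k (hj0i.trans hk).ne', hfj j0 hj0i.ne', hj0r]
          rcases lt_or_eq_of_le (hle k) with h | h
          · exact h
          · exact absurd (Finset.le_max' _ k (hmemS k h)) (not_le.2 hk)
      rcases hbf.2 j0 hRE with hodd | hmax
      · rw [hfj j0 hj0i.ne', hj0r] at hodd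
        exact (Nat.not_odd_iff_even.2 heven) hodd
      · rw [hfj j0 hj0i.ne', hj0r, hmaxf] at hmax
        omega
  · -- StronglyExtremal → Boundary f
    intro hse
    constructor
    · intro j hjL
      by_cases hji : j = i
      · right; rw [hji, hfi, hmaxf]
      · have hij : j < i := by
          rcases lt_or_gt_of_ne hji with h | h
          · exact h
          · exfalso
            have h2 := hjL.2 i h
            rw [hfi, hfj j hji] at h2
            exact absurd (le_trans (hle j) (Nat.le_succ _)) (not_le.2 h2)
        have hLE : LeftExtremal ht j := by
          refine ⟨by rw [← hfj j hji]; exact hjL.1, fun k hk => ?_⟩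
          have h2 := hjL.2 k hk
          rwa [hfj k (hk.trans hij).ne, hfj j hji] at h2
        left
        rw [hfj j hji]
        rcases hb.1 j hLE with he | hm
        · exact he
        · rcases Nat.even_or_odd (maxHt ht) with he | ho
          · rw [hm]; exact he
          · exact absurd hm (hse.2.1 ho j hij).ne
    · intro j hjR
      by_cases hji : j = i
      · right; rw [hji, hfi, hmaxf]
      · have hij : i < j := by
          rcases lt_or_gt_of_ne hji with h | h
          · exfalso
            have h2 := hjR.2 i h
            rw [hfi, hfj j hji] at h2
            exact absurd (le_trans (hle j) (Nat.le_succ _)) (not_le.2 h2)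
          · exact h
        have hRE : RightExtremal ht j := by
          refine ⟨by rw [← hfj j hji]; exact hjR.1, fun k hk => ?_⟩
          have h2 := hjR.2 k hk
          rwa [hfj k (hij.trans hk).ne', hfj j hji] at h2
        left
        rw [hfj j hji]
        rcases hb.2 j hRE with ho | hm
        · exact ho
        · rcases Nat.even_or_odd (maxHt ht) with he | ho
          · exact absurd hm (hse.2.2 he j hij).ne
          · rw [hm]; exact ho
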